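/- Let p, r, t be real numbers with 0 < r ≤ p < p + t < 1, let n_r and n_p be positive integers, and set n = n_r + n_p. Then Σ over all pairs of integers (i_r, i_p) with 0 ≤ i_r ≤ n_r, 0 ≤ i_p ≤ n_p and i_r + i_p ≥ (p + t)·n of C(n_p, i_p)·C(n_r, i_r)·p^{i_p}·(1−p)^{n_p−i_p}·r^{i_r}·(1−r)^{n_r−i_r} is at most e^{−2t²n}. -/

import Mathlib

open scoped Classical

/-- upper tail bound for a sum of two binomial distributions.
For `0 < r ≤ p < p + t < 1` and `n = n_r + n_p`,
`Σ_{i_r + i_p ≥ (p+t)n} C(n_p,i_p) C(n_r,i_r) p^{i_p}(1−p)^{n_p−i_p} r^{i_r}(1−r)^{n_r−i_r}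
  ≤ e^{−2t²n}`. -/
lemma hoeff_scalar (q : ℝ) (hq0 : 0 ≤ q) (hq1 : q ≤ 1) (u : ℝ) (hu : 0 ≤ u) :
    1 - q + q * Real.exp u ≤ Real.exp (q * u + u ^ 2 / 8) := by
  have hd : ∀ x : ℝ, 0 < 1 - q + q * Real.exp x := by
    intro x
    rcases le_or_gt (Real.exp x) 1 with h | h
    · nlinarith [Real.exp_pos x]
    · nlinarith [Real.exp_pos x]
  -- g y = q*y + y^2/8 - log (d y)
  set g : ℝ → ℝ := fun y => q * y + y ^ 2 / 8 - Real.log (1 - q + q * Real.exp y) with hg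
  set f1 : ℝ → ℝ := fun y => q + y / 4 - q * Real.exp y / (1 - q + q * Real.exp y) with hf1
  have hdd : ∀ x : ℝ, HasDerivAt (fun y => 1 - q + q * Real.exp y) (q * Real.exp x) x := by
    intro x
    exact ((Real.hasDerivAt_exp x).const_mul q).const_add (1 - q)
  have hder1 : ∀ x : ℝ, HasDerivAt g (f1 x) x := by
    intro x
    have h2 := (hdd x).log (hd x).ne'
    have h3 : HasDerivAt (fun y : ℝ => q * y + y ^ 2 / 8) (q + x / 4) x := by
      have := ((hasDerivAt_id x).const_mul q).add ((hasDerivAt_pow 2 x).div_const 8)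
      refine this.congr_deriv ?_
      norm_num
      ring
    exact h3.sub h2
  have hder2 : ∀ x : ℝ, HasDerivAt f1
      (1 / 4 - (q * Real.exp x * (1 - q)) / (1 - q + q * Real.exp x) ^ 2) x := by
    intro x
    have hq := ((Real.hasDerivAt_exp x).const_mul q).div (hdd x) (hd x).ne'
    have h3 : HasDerivAt (fun y : ℝ => q + y / 4) (1 / 4) x := by
      simpa using ((hasDerivAt_id x).div_const 4).const_add q
    refine (h3.sub hq).congr_deriv ?_
    field_simp
    ring
  have hf2 : ∀ x : ℝ, 0 ≤ 1 / 4 - (q * Real.exp x * (1 - q)) / (1 - q + q * Real.exp x) ^ 2 := by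
    intro x
    rw [sub_nonneg, div_le_iff₀ (pow_pos (hd x) 2)]
    nlinarith [sq_nonneg (q * Real.exp x - (1 - q)), Real.exp_pos x]
  have hf1mono : Monotone f1 := by
    have : ∀ x : ℝ, 0 ≤ deriv f1 x := fun x => (hder2 x).deriv ▸ hf2 x
    exact monotone_of_deriv_nonneg (fun x => (hder2 x).differentiableAt) this
  have hf10 : f1 0 = 0 := by simp [hf1]
  have hf1nn : ∀ x : ℝ, 0 ≤ x → 0 ≤ f1 x := fun x hx => hf10 ▸ hf1mono hx
  have hgmono : MonotoneOn g (Set.Ici (0 : ℝ)) := by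
    refine monotoneOn_of_deriv_nonneg (convex_Ici 0)
      (Continuous.continuousOn ?_) (fun x _ => (hder1 x).differentiableAt.differentiableWithinAt)
      (fun x hx => ?_)
    · exact continuous_iff_continuousAt.2 fun x => (hder1 x).continuousAt
    · rw [(hder1 x).deriv]
      exact hf1nn x (le_of_lt (by simpa using hx))
  have hg0 : g 0 = 0 := by simp [hg]
  have := hgmono (Set.self_mem_Ici) (Set.mem_Ici.2 hu) hu
  rw [hg0] at this
  have hlog : Real.log (1 - q + q * Real.exp u) ≤ q * u + u ^ 2 / 8 := by
    simp only [hg] at this; linarith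
  calc 1 - q + q * Real.exp u = Real.exp (Real.log (1 - q + q * Real.exp u)) :=
        (Real.exp_log (hd u)).symm
    _ ≤ _ := Real.exp_le_exp.2 hlog

open scoped Classical


theorem stmt14 (p r t : ℝ) (hr : 0 < r) (hrp : r ≤ p) (hpt : p < p + t) (h1 : p + t < 1)
    (nr np : ℕ) (hnr : 0 < nr) (hnp : 0 < np) :
    ∑ x ∈ (Finset.range (nr + 1) ×ˢ Finset.range (np + 1)).filter
        (fun x => (p + t) * ((nr : ℝ) + np) ≤ (x.1 : ℝ) + (x.2 : ℝ)),
      (np.choose x.2 : ℝ) * (nr.choose x.1 : ℝ) *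
        p ^ x.2 * (1 - p) ^ (np - x.2) * r ^ x.1 * (1 - r) ^ (nr - x.1)
    ≤ Real.exp (-2 * t ^ 2 * ((nr : ℝ) + np)) := by
  have ht : 0 < t := by linarith
  have hp0 : 0 < p := lt_of_lt_of_le hr hrp
  have hp1 : p < 1 := by linarith
  have hr1 : r < 1 := by linarith
  set E : ℝ := Real.exp (4 * t) with hE
  have hEpos : 0 < E := Real.exp_pos _
  set a : ℝ := (p + t) * ((nr : ℝ) + np) with ha
  have hterm : ∀ x : ℕ × ℕ, 0 ≤ (np.choose x.2 : ℝ) * (nr.choose x.1 : ℝ) *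
        p ^ x.2 * (1 - p) ^ (np - x.2) * r ^ x.1 * (1 - r) ^ (nr - x.1) := by
    intro x
    refine mul_nonneg (mul_nonneg (mul_nonneg (mul_nonneg (mul_nonneg ?_ ?_) ?_) ?_) ?_) ?_
    · exact Nat.cast_nonneg _
    · exact Nat.cast_nonneg _
    · exact pow_nonneg hp0.le _
    · exact pow_nonneg (by linarith) _
    · exact pow_nonneg hr.le _
    · exact pow_nonneg (by linarith) _
  set A : ℕ → ℝ := fun i =>
    Real.exp (-(4 * t) * a) * ((r * E) ^ i * (1 - r) ^ (nr - i) * (nr.choose i : ℝ)) with hA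
  set B : ℕ → ℝ := fun j =>
    (p * E) ^ j * (1 - p) ^ (np - j) * (np.choose j : ℝ) with hB
  have key1 : (∑ x ∈ (Finset.range (nr + 1) ×ˢ Finset.range (np + 1)).filter
        (fun x => (p + t) * ((nr : ℝ) + np) ≤ (x.1 : ℝ) + (x.2 : ℝ)),
      (np.choose x.2 : ℝ) * (nr.choose x.1 : ℝ) *
        p ^ x.2 * (1 - p) ^ (np - x.2) * r ^ x.1 * (1 - r) ^ (nr - x.1))
      ≤ ∑ x ∈ Finset.range (nr + 1) ×ˢ Finset.range (np + 1),
        ((np.choose x.2 : ℝ) * (nr.choose x.1 : ℝ) *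
          p ^ x.2 * (1 - p) ^ (np - x.2) * r ^ x.1 * (1 - r) ^ (nr - x.1)) *
          Real.exp (4 * t * ((x.1 : ℝ) + x.2) - 4 * t * a) := by
    calc _ ≤ ∑ x ∈ (Finset.range (nr + 1) ×ˢ Finset.range (np + 1)).filter
              (fun x => (p + t) * ((nr : ℝ) + np) ≤ (x.1 : ℝ) + (x.2 : ℝ)),
              ((np.choose x.2 : ℝ) * (nr.choose x.1 : ℝ) *
                p ^ x.2 * (1 - p) ^ (np - x.2) * r ^ x.1 * (1 - r) ^ (nr - x.1)) *
                Real.exp (4 * t * ((x.1 : ℝ) + x.2) - 4 * t * a) := by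
          refine Finset.sum_le_sum (fun x hx => ?_)
          have hx' := (Finset.mem_filter.1 hx).2
          refine le_mul_of_one_le_right (hterm x) (Real.one_le_exp ?_)
          rw [ha]
          nlinarith [ht]
      _ ≤ _ := by
          refine Finset.sum_le_sum_of_subset_of_nonneg (Finset.filter_subset _ _)
            (fun x _ _ => mul_nonneg (hterm x) (Real.exp_pos _).le)
  have key2 : (∑ x ∈ Finset.range (nr + 1) ×ˢ Finset.range (np + 1),
        ((np.choose x.2 : ℝ) * (nr.choose x.1 : ℝ) *
          p ^ x.2 * (1 - p) ^ (np - x.2) * r ^ x.1 * (1 - r) ^ (nr - x.1)) *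
          Real.exp (4 * t * ((x.1 : ℝ) + x.2) - 4 * t * a))
      = Real.exp (-(4 * t) * a) * ((r * E + (1 - r)) ^ nr * (p * E + (1 - p)) ^ np) := by
    have hsummand : ∀ x : ℕ × ℕ,
        ((np.choose x.2 : ℝ) * (nr.choose x.1 : ℝ) *
          p ^ x.2 * (1 - p) ^ (np - x.2) * r ^ x.1 * (1 - r) ^ (nr - x.1)) *
          Real.exp (4 * t * ((x.1 : ℝ) + x.2) - 4 * t * a) = A x.1 * B x.2 := by
      rintro ⟨i, j⟩
      have e1 : Real.exp (4 * t * ((i : ℝ) + j) - 4 * t * a)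
          = Real.exp (-(4 * t) * a) * (E ^ i * E ^ j) := by
        rw [hE, ← Real.exp_nat_mul, ← Real.exp_nat_mul, ← Real.exp_add, ← Real.exp_add]
        congr 1
        ring
      simp only [hA, hB]
      rw [e1, mul_pow, mul_pow]
      ring
    calc _ = ∑ x ∈ Finset.range (nr + 1) ×ˢ Finset.range (np + 1), A x.1 * B x.2 := by
            exact Finset.sum_congr rfl (fun x _ => hsummand x)
      _ = (∑ i ∈ Finset.range (nr + 1), A i) * (∑ j ∈ Finset.range (np + 1), B j) := by
            rw [Finset.sum_product]
            exact (Finset.sum_mul_sum _ _ _ _).symm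
      _ = _ := by
            simp only [hA, hB]
            rw [← Finset.mul_sum, ← add_pow, ← add_pow]
            ring
  have hhr := hoeff_scalar r hr.le (by linarith) (4 * t) (by linarith)
  have hhp := hoeff_scalar p hp0.le (by linarith) (4 * t) (by linarith)
  have hrE : (0:ℝ) ≤ r * E + (1 - r) := by nlinarith [mul_nonneg hr.le hEpos.le]
  have hpE : (0:ℝ) ≤ p * E + (1 - p) := by nlinarith [mul_nonneg hp0.le hEpos.le]
  have key3 : Real.exp (-(4 * t) * a) * ((r * E + (1 - r)) ^ nr * (p * E + (1 - p)) ^ np)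
      ≤ Real.exp (-2 * t ^ 2 * ((nr : ℝ) + np)) := by
    have h2 : (r * E + (1 - r)) ^ nr ≤ Real.exp ((nr : ℝ) * (r * (4 * t) + (4 * t) ^ 2 / 8)) := by
      rw [Real.exp_nat_mul]
      exact pow_le_pow_left₀ hrE (by rw [hE]; linarith) nr
    have h3 : (p * E + (1 - p)) ^ np ≤ Real.exp ((np : ℝ) * (p * (4 * t) + (4 * t) ^ 2 / 8)) := by
      rw [Real.exp_nat_mul]
      exact pow_le_pow_left₀ hpE (by rw [hE]; linarith) np
    calc Real.exp (-(4 * t) * a) * ((r * E + (1 - r)) ^ nr * (p * E + (1 - p)) ^ np)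
        ≤ Real.exp (-(4 * t) * a) * (Real.exp ((nr : ℝ) * (r * (4 * t) + (4 * t) ^ 2 / 8)) *
            Real.exp ((np : ℝ) * (p * (4 * t) + (4 * t) ^ 2 / 8))) := by
          refine mul_le_mul_of_nonneg_left ?_ (Real.exp_pos _).le
          exact mul_le_mul h2 h3 (pow_nonneg hpE _) (Real.exp_pos _).le
      _ = Real.exp (-(4 * t) * a + ((nr : ℝ) * (r * (4 * t) + (4 * t) ^ 2 / 8)
            + (np : ℝ) * (p * (4 * t) + (4 * t) ^ 2 / 8))) := by
          rw [← Real.exp_add, ← Real.exp_add]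
      _ ≤ _ := by
          rw [Real.exp_le_exp, ha]
          nlinarith [mul_nonneg (mul_nonneg ht.le (sub_nonneg.2 hrp)) (Nat.cast_nonneg (α := ℝ) nr)]
  calc _ ≤ _ := key1
    _ = _ := key2
    _ ≤ _ := key3
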